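/- Let ξ ∈ ℝ. Let μ: ℝ → ℝ be Lipschitz on (−∞, ξ) and Lipschitz on (ξ, ∞), with one-sided limits μ(ξ+) and μ(ξ−) at ξ, and let σ: ℝ → ℝ be Lipschitz continuous with σ(ξ) ≠ 0. Set α := (μ(ξ−) − μ(ξ+)) / (2σ(ξ)²), let c > 0 satisfy 6|α|c < 1, let φ̄(x) = (x−ξ)|x−ξ| φ((x−ξ)/c), and let G(x) = x + α φ̄(x) (a bijection of ℝ). Define h: ℝ → ℝ by h(x) = μ(x)(1 + α φ̄'(x)) + (1/2) α φ̄''(x) σ(x)² for x ≠ ξ and h(ξ) = (μ(ξ+) + μ(ξ−))/2. Then the transformed drift μ̃ := h ∘ G⁻¹ is Lipschitz continuous on ℝ. -/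

import Mathlib

open Filter NNReal

/-- The bump function `φ(u) = (1+u)³(1-u)³` for `|u| ≤ 1` and `φ(u) = 0` otherwise. -/
noncomputable def phi (u : ℝ) : ℝ := if |u| ≤ 1 then (1 + u) ^ 3 * (1 - u) ^ 3 else 0

/-- `φ̄(x) = (x-ξ)|x-ξ| φ((x-ξ)/c)`. -/
noncomputable def phibar (ξ c : ℝ) (x : ℝ) : ℝ := (x - ξ) * |x - ξ| * phi ((x - ξ) / c)

/-- The transform `G(x) = x + α φ̄(x)`. -/
noncomputable def transformG (ξ α c : ℝ) (x : ℝ) : ℝ := x + α * phibar ξ c x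

open Set

noncomputable def vp (v : ℝ) : ℝ := max v 0

lemma vp_nonneg (v : ℝ) : 0 ≤ vp v := le_max_right _ _
lemma vp_le_abs (v : ℝ) : vp v ≤ |v| := max_le (le_abs_self v) (abs_nonneg v)
lemma vp_of_nonneg {v : ℝ} (h : 0 ≤ v) : vp v = v := max_eq_left h
lemma vp_of_nonpos {v : ℝ} (h : v ≤ 0) : vp v = 0 := max_eq_right h
lemma vp_le_one {v : ℝ} (h : v ≤ 1) : vp v ≤ 1 := max_le h zero_le_one
lemma lip_vp (a b : ℝ) : |vp a - vp b| ≤ |a - b| := abs_max_sub_max_le_abs a b 0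
lemma continuous_vp : Continuous vp := continuous_id.max continuous_const

lemma hasDerivAt_vp_sq (v : ℝ) : HasDerivAt (fun y => vp y ^ 2) (2 * vp v) v := by
  rcases lt_trichotomy v 0 with hv | hv | hv
  · have hev : (fun y : ℝ => vp y ^ 2) =ᶠ[nhds v] (fun _ => (0:ℝ)) := by
      filter_upwards [Iio_mem_nhds hv] with y hy
      simp [vp_of_nonpos (le_of_lt hy)]
    have := (hasDerivAt_const v (0:ℝ)).congr_of_eventuallyEq hev
    simpa [vp_of_nonpos hv.le] using this
  · subst hv
    rw [hasDerivAt_iff_isLittleO]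
    rw [Asymptotics.isLittleO_iff]
    intro C hC
    filter_upwards [Metric.ball_mem_nhds (0:ℝ) hC] with y hy
    rw [Metric.mem_ball, Real.dist_eq, sub_zero] at hy
    have h1 : vp y ≤ |y| := vp_le_abs y
    have h0 : 0 ≤ vp y := vp_nonneg y
    have h2 : vp y ^ 2 ≤ C * |y| := by nlinarith [abs_nonneg y]
    have h3 : vp (0:ℝ) = 0 := vp_of_nonpos le_rfl
    simp only [h3, Real.norm_eq_abs, smul_eq_mul, sub_zero, mul_zero, zero_pow, ne_eq,
      OfNat.ofNat_ne_zero, not_false_iff]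
    rw [abs_of_nonneg (by positivity : (0:ℝ) ≤ vp y ^ 2)]
    exact h2
  · have hev : (fun y : ℝ => vp y ^ 2) =ᶠ[nhds v] (fun y => y ^ 2) := by
      filter_upwards [Ioi_mem_nhds hv] with y hy
      simp [vp_of_nonneg (le_of_lt hy)]
    have := (hasDerivAt_pow 2 v).congr_of_eventuallyEq hev
    simpa [vp_of_nonneg hv.le] using this

lemma hasDerivAt_vp_cube (v : ℝ) : HasDerivAt (fun y => vp y ^ 3) (3 * vp v ^ 2) v := by
  rcases lt_trichotomy v 0 with hv | hv | hv
  · have hev : (fun y : ℝ => vp y ^ 3) =ᶠ[nhds v] (fun _ => (0:ℝ)) := by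
      filter_upwards [Iio_mem_nhds hv] with y hy
      simp [vp_of_nonpos (le_of_lt hy)]
    have := (hasDerivAt_const v (0:ℝ)).congr_of_eventuallyEq hev
    simpa [vp_of_nonpos hv.le] using this
  · subst hv
    rw [hasDerivAt_iff_isLittleO]
    rw [Asymptotics.isLittleO_iff]
    intro C hC
    filter_upwards [Metric.ball_mem_nhds (0:ℝ) (lt_min hC one_pos)] with y hy
    rw [Metric.mem_ball, Real.dist_eq, sub_zero, lt_min_iff] at hy
    have h1 : vp y ≤ |y| := vp_le_abs y
    have h0 : 0 ≤ vp y := vp_nonneg y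
    have a1 : vp y ^ 3 ≤ |y| ^ 3 := pow_le_pow_left₀ h0 h1 3
    have a2 : |y| ^ 3 ≤ |y| * |y| := by nlinarith [abs_nonneg y, hy.2]
    have a3 : |y| * |y| ≤ C * |y| := mul_le_mul_of_nonneg_right hy.1.le (abs_nonneg y)
    have h2 : vp y ^ 3 ≤ C * |y| := by linarith
    have h3 : vp (0:ℝ) = 0 := vp_of_nonpos le_rfl
    simp only [h3, Real.norm_eq_abs, smul_eq_mul, sub_zero, mul_zero, zero_pow, ne_eq,
      OfNat.ofNat_ne_zero, not_false_iff]
    rw [abs_of_nonneg (by positivity : (0:ℝ) ≤ vp y ^ 3)]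
    exact h2
  · have hev : (fun y : ℝ => vp y ^ 3) =ᶠ[nhds v] (fun y => y ^ 3) := by
      filter_upwards [Ioi_mem_nhds hv] with y hy
      simp [vp_of_nonneg (le_of_lt hy)]
    have := (hasDerivAt_pow 3 v).congr_of_eventuallyEq hev
    simp only [vp_of_nonneg hv.le]
    exact this.congr_deriv (by norm_num)

lemma hasDerivAt_mul_abs (v : ℝ) : HasDerivAt (fun y : ℝ => y * |y|) (2 * |v|) v := by
  rcases lt_trichotomy v 0 with hv | hv | hv
  · have hev : (fun y : ℝ => y * |y|) =ᶠ[nhds v] (fun y => -(y ^ 2)) := by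
      filter_upwards [Iio_mem_nhds hv] with y hy
      rw [abs_of_neg hy]; ring
    have := ((hasDerivAt_pow 2 v).neg).congr_of_eventuallyEq hev
    have h2 : -(2 * v ^ (2-1)) = 2 * |v| := by rw [abs_of_neg hv]; ring
    rw [← h2]; exact this
  · subst hv
    rw [hasDerivAt_iff_isLittleO]
    rw [Asymptotics.isLittleO_iff]
    intro C hC
    filter_upwards [Metric.ball_mem_nhds (0:ℝ) hC] with y hy
    rw [Metric.mem_ball, Real.dist_eq, sub_zero] at hy
    simp only [abs_zero, mul_zero, zero_mul, sub_zero, smul_eq_mul, Real.norm_eq_abs]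
    rw [abs_mul, abs_abs]
    nlinarith [abs_nonneg y]
  · have hev : (fun y : ℝ => y * |y|) =ᶠ[nhds v] (fun y => y ^ 2) := by
      filter_upwards [Ioi_mem_nhds hv] with y hy
      rw [abs_of_pos hy]; ring
    have := (hasDerivAt_pow 2 v).congr_of_eventuallyEq hev
    have h2 : (2:ℝ) * v ^ (2-1) = 2 * |v| := by rw [abs_of_pos hv]; norm_num
    rw [← h2]; exact this


noncomputable def wf (ξ c x : ℝ) : ℝ := vp (1 - (x - ξ)^2 / c^2)
noncomputable def Dph (ξ c x : ℝ) : ℝ :=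
  2 * |x - ξ| * (wf ξ c x)^3 - 6*(x-ξ)^2 * |x - ξ| * (wf ξ c x)^2/c^2
noncomputable def D1p (ξ c x : ℝ) : ℝ :=
  2*(x-ξ)*(wf ξ c x)^3 - 6*(x-ξ)^3*(wf ξ c x)^2/c^2
noncomputable def D2p (ξ c x : ℝ) : ℝ :=
  2*(wf ξ c x)^3 - 30*(x-ξ)^2*(wf ξ c x)^2/c^2 + 24*(x-ξ)^4*(wf ξ c x)/c^4

lemma phi_eq (u : ℝ) : phi u = vp (1 - u^2) ^ 3 := by
  unfold phi
  split_ifs with h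
  · rw [vp_of_nonneg (by nlinarith [abs_le.mp h] : (0:ℝ) ≤ 1 - u^2)]
    ring
  · push_neg at h
    have : u^2 > 1 := by nlinarith [sq_abs u, abs_nonneg u]
    rw [vp_of_nonpos (by linarith)]
    ring

lemma phibar_eq (ξ c x : ℝ) : phibar ξ c x = (x - ξ) * |x - ξ| * (wf ξ c x)^3 := by
  unfold phibar wf
  rw [phi_eq, div_pow]

lemma hasDerivAt_inner (ξ c x : ℝ) :
    HasDerivAt (fun x => 1 - (x - ξ)^2 / c^2) (-2*(x-ξ)/c^2) x := by
  have h1 : HasDerivAt (fun x : ℝ => x - ξ) 1 x := (hasDerivAt_id x).sub_const ξ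
  have := ((h1.pow 2).div_const (c^2)).const_sub 1
  refine this.congr_deriv ?_
  norm_num; ring

lemma hasDerivAt_wf_cube (ξ c x : ℝ) :
    HasDerivAt (fun x => (wf ξ c x)^3) (-6*(x-ξ)*(wf ξ c x)^2/c^2) x := by
  have := (hasDerivAt_vp_cube (1 - (x - ξ)^2 / c^2)).comp x (hasDerivAt_inner ξ c x)
  have h2 : (fun y => vp y ^ 3) ∘ (fun x : ℝ => 1 - (x - ξ)^2 / c^2) = fun x => (wf ξ c x)^3 := rfl
  rw [h2] at this
  refine this.congr_deriv ?_
  unfold wf; ring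

lemma hasDerivAt_wf_sq (ξ c x : ℝ) :
    HasDerivAt (fun x => (wf ξ c x)^2) (-4*(x-ξ)*(wf ξ c x)/c^2) x := by
  have := (hasDerivAt_vp_sq (1 - (x - ξ)^2 / c^2)).comp x (hasDerivAt_inner ξ c x)
  have h2 : (fun y => vp y ^ 2) ∘ (fun x : ℝ => 1 - (x - ξ)^2 / c^2) = fun x => (wf ξ c x)^2 := rfl
  rw [h2] at this
  refine this.congr_deriv ?_
  unfold wf; ring

lemma hasDerivAt_phibar (ξ c x : ℝ) : HasDerivAt (phibar ξ c) (Dph ξ c x) x := by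
  have hsabs : HasDerivAt (fun x : ℝ => (x-ξ)*|x-ξ|) (2*|x-ξ|) x := by
    have := (hasDerivAt_mul_abs (x-ξ)).comp x ((hasDerivAt_id x).sub_const ξ)
    exact this.congr_deriv (mul_one _)
  have hmul := hsabs.mul (hasDerivAt_wf_cube ξ c x)
  have hfun : phibar ξ c = fun x => (x - ξ) * |x - ξ| * (wf ξ c x)^3 := funext (phibar_eq ξ c)
  rw [hfun]
  refine hmul.congr_deriv ?_
  unfold Dph; ring

lemma hasDerivAt_D1p (ξ c x : ℝ) : HasDerivAt (D1p ξ c) (D2p ξ c x) x := by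
  have h1 : HasDerivAt (fun x : ℝ => x - ξ) 1 x := (hasDerivAt_id x).sub_const ξ
  have hp1 := h1.mul (hasDerivAt_wf_cube ξ c x)
  have hp2 := (h1.pow 3).mul (hasDerivAt_wf_sq ξ c x)
  have hcomb := ((hp1.const_mul 2).sub ((hp2.const_mul 6).div_const (c^2)))
  have hfun : D1p ξ c = fun x => 2*((x-ξ)*(wf ξ c x)^3) - 6*((x-ξ)^3*(wf ξ c x)^2)/c^2 := by
    funext x; unfold D1p; ring
  rw [hfun]
  refine hcomb.congr_deriv ?_
  unfold D2p; push_cast [Pi.pow_apply]; ring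

lemma wf_zero {ξ c x : ℝ} (hc : 0 < c) (h : c ≤ |x - ξ|) : wf ξ c x = 0 := by
  apply vp_of_nonpos
  rw [sub_nonpos, le_div_iff₀ (by positivity)]
  nlinarith [sq_abs (x - ξ), abs_nonneg (x - ξ)]

lemma wf_xi (ξ c : ℝ) : wf ξ c ξ = 1 := by
  unfold wf
  simp [vp_of_nonneg]

lemma wf_nonneg (ξ c x : ℝ) : 0 ≤ wf ξ c x := vp_nonneg _
lemma wf_le_one (ξ c x : ℝ) : wf ξ c x ≤ 1 := vp_le_one (by nlinarith [sq_nonneg ((x-ξ)/c), div_pow (x-ξ) c 2] : 1 - (x - ξ)^2/c^2 ≤ 1)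

lemma continuous_wf (ξ c : ℝ) : Continuous (wf ξ c) := by
  apply continuous_vp.comp
  fun_prop

lemma Dph_eq_right {ξ c x : ℝ} (hx : ξ < x) : Dph ξ c x = D1p ξ c x := by
  unfold Dph D1p
  rw [abs_of_pos (by linarith : (0:ℝ) < x - ξ)]
  ring

lemma Dph_eq_left {ξ c x : ℝ} (hx : x < ξ) : Dph ξ c x = -D1p ξ c x := by
  unfold Dph D1p
  rw [abs_of_neg (by linarith : x - ξ < 0)]
  ring

lemma deriv_phibar (ξ c : ℝ) : deriv (phibar ξ c) = Dph ξ c :=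
  funext fun x => (hasDerivAt_phibar ξ c x).deriv

lemma deriv2_right {ξ c x : ℝ} (hx : ξ < x) :
    deriv (deriv (phibar ξ c)) x = D2p ξ c x := by
  rw [deriv_phibar]
  have hev : Dph ξ c =ᶠ[nhds x] D1p ξ c := by
    filter_upwards [Ioi_mem_nhds hx] with y hy
    exact Dph_eq_right hy
  rw [hev.deriv_eq]
  exact (hasDerivAt_D1p ξ c x).deriv

lemma deriv2_left {ξ c x : ℝ} (hx : x < ξ) :
    deriv (deriv (phibar ξ c)) x = -D2p ξ c x := by
  rw [deriv_phibar]
  have hev : Dph ξ c =ᶠ[nhds x] (fun y => -D1p ξ c y) := by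
    filter_upwards [Iio_mem_nhds hx] with y hy
    exact Dph_eq_left hy
  rw [hev.deriv_eq]
  exact ((hasDerivAt_D1p ξ c x).neg).deriv

lemma D1p_zero {ξ c x : ℝ} (h : wf ξ c x = 0) : D1p ξ c x = 0 := by
  unfold D1p; rw [h]; ring
lemma D2p_zero {ξ c x : ℝ} (h : wf ξ c x = 0) : D2p ξ c x = 0 := by
  unfold D2p; rw [h]; ring
lemma D1p_xi (ξ c : ℝ) : D1p ξ c ξ = 0 := by unfold D1p; simp
lemma D2p_xi (ξ c : ℝ) : D2p ξ c ξ = 2 := by unfold D2p; rw [wf_xi]; simp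

lemma Dph_bound {ξ c : ℝ} (hc : 0 < c) (x : ℝ) : |Dph ξ c x| ≤ 2 * c := by
  by_cases hcs : c ≤ |x - ξ|
  · rw [show Dph ξ c x = 0 by unfold Dph; rw [wf_zero hc hcs]; ring]
    rw [abs_zero]; positivity
  · push_neg at hcs
    set a := |x - ξ| with ha
    have ha0 : 0 ≤ a := abs_nonneg _
    have hsq : (x - ξ)^2 = a^2 := (sq_abs _).symm
    have hwv : wf ξ c x = 1 - a^2/c^2 := by
      unfold wf
      rw [hsq]
      exact vp_of_nonneg (by rw [sub_nonneg, div_le_one (by positivity)]; nlinarith)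
    set w := wf ξ c x with hw
    have hw0 : 0 ≤ w := vp_nonneg _
    have habs : |Dph ξ c x| ≤ 2*a*w^3 + 6*a^2*a*w^2/c^2 := by
      have hD : Dph ξ c x = 2*a*w^3 - 6*a^2*a*w^2/c^2 := by
        unfold Dph
        rw [← hw, ← ha, hsq]
      rw [hD]
      have h2a : (0:ℝ) ≤ 2*a*w^3 := mul_nonneg (mul_nonneg (by norm_num) ha0) (pow_nonneg hw0 3)
      have h2b : (0:ℝ) ≤ 6*a^2*a*w^2/c^2 :=
        div_nonneg (mul_nonneg (mul_nonneg (mul_nonneg (by norm_num) (sq_nonneg a)) ha0) (sq_nonneg w)) (sq_nonneg c)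
      have h1 := abs_sub (2*a*w^3) (6*a^2*a*w^2/c^2)
      rw [abs_of_nonneg h2a, abs_of_nonneg h2b] at h1
      exact h1
    have hz : w^2 * (1 + 2*a^2/c^2) ≤ 1 := by
      rw [hwv]
      have h1 : a^2/c^2 ≤ 1 := by rw [div_le_one (by positivity)]; nlinarith
      have h2 : (0:ℝ) ≤ a^2/c^2 := by positivity
      have hgen : ∀ z : ℝ, 0 ≤ z → z ≤ 1 → (1-z)^2*(1+2*z) ≤ 1 := by
        intro z hz0 hz1
        nlinarith [mul_nonneg (mul_nonneg hz0 hz0) (by linarith : (0:ℝ) ≤ 3 - 2*z)]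
      have := hgen _ h2 h1
      linarith [this, (by ring : (1 - a ^ 2 / c ^ 2) ^ 2 * (1 + 2 * (a ^ 2 / c ^ 2)) = (1 - a ^ 2 / c ^ 2) ^ 2 * (1 + 2 * a ^ 2 / c ^ 2))]
    have hE : 2*a*w^3 + 6*a^2*a*w^2/c^2 = 2*a*(w^2*(1+2*a^2/c^2)) := by
      rw [hwv]; field_simp; ring
    have key : 2*a*w^3 + 6*a^2*a*w^2/c^2 ≤ 2*c := by
      rw [hE]
      nlinarith [mul_nonneg ha0 (mul_nonneg (sq_nonneg w) (by positivity : (0:ℝ) ≤ 1 + 2*a^2/c^2))]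
    linarith

/-- Bounded and Lipschitz on a set, with nonnegative constants. -/
def GoodOn (S : Set ℝ) (f : ℝ → ℝ) : Prop :=
  ∃ B L : ℝ, 0 ≤ B ∧ 0 ≤ L ∧ (∀ x ∈ S, |f x| ≤ B) ∧
    ∀ x ∈ S, ∀ y ∈ S, |f x - f y| ≤ L * |x - y|

lemma GoodOn.const (S : Set ℝ) (a : ℝ) : GoodOn S (fun _ => a) :=
  ⟨|a|, 0, abs_nonneg a, le_refl 0, fun x _ => le_refl _, fun x _ y _ => by simp⟩

lemma GoodOn.add {S : Set ℝ} {f g : ℝ → ℝ} (hf : GoodOn S f) (hg : GoodOn S g) :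
    GoodOn S (fun x => f x + g x) := by
  obtain ⟨Bf, Lf, hBf, hLf, hbf, hlf⟩ := hf
  obtain ⟨Bg, Lg, hBg, hLg, hbg, hlg⟩ := hg
  refine ⟨Bf + Bg, Lf + Lg, by linarith, by linarith, ?_, ?_⟩
  · intro x hx
    calc |f x + g x| ≤ |f x| + |g x| := abs_add_le _ _
      _ ≤ Bf + Bg := add_le_add (hbf x hx) (hbg x hx)
  · intro x hx y hy
    have : f x + g x - (f y + g y) = (f x - f y) + (g x - g y) := by ring
    rw [this]
    calc |(f x - f y) + (g x - g y)| ≤ |f x - f y| + |g x - g y| := abs_add_le _ _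
      _ ≤ Lf * |x - y| + Lg * |x - y| := add_le_add (hlf x hx y hy) (hlg x hx y hy)
      _ = (Lf + Lg) * |x - y| := by ring

lemma GoodOn.mul {S : Set ℝ} {f g : ℝ → ℝ} (hf : GoodOn S f) (hg : GoodOn S g) :
    GoodOn S (fun x => f x * g x) := by
  obtain ⟨Bf, Lf, hBf, hLf, hbf, hlf⟩ := hf
  obtain ⟨Bg, Lg, hBg, hLg, hbg, hlg⟩ := hg
  refine ⟨Bf * Bg, Bf * Lg + Bg * Lf, by positivity, by positivity, ?_, ?_⟩
  · intro x hx
    rw [abs_mul]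
    exact mul_le_mul (hbf x hx) (hbg x hx) (abs_nonneg _) hBf
  · intro x hx y hy
    have hid : f x * g x - f y * g y = f x * (g x - g y) + g y * (f x - f y) := by ring
    rw [hid]
    calc |f x * (g x - g y) + g y * (f x - f y)|
        ≤ |f x * (g x - g y)| + |g y * (f x - f y)| := abs_add_le _ _
      _ = |f x| * |g x - g y| + |g y| * |f x - f y| := by rw [abs_mul, abs_mul]
      _ ≤ Bf * (Lg * |x - y|) + Bg * (Lf * |x - y|) := by
          apply add_le_add
          · exact mul_le_mul (hbf x hx) (hlg x hx y hy) (abs_nonneg _) hBf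
          · exact mul_le_mul (hbg y hy) (hlf x hx y hy) (abs_nonneg _) hBg
      _ = (Bf * Lg + Bg * Lf) * |x - y| := by ring

lemma GoodOn.congr {S : Set ℝ} {f g : ℝ → ℝ} (hf : GoodOn S f) (he : ∀ x ∈ S, f x = g x) :
    GoodOn S g := by
  obtain ⟨Bf, Lf, hBf, hLf, hbf, hlf⟩ := hf
  exact ⟨Bf, Lf, hBf, hLf, fun x hx => (he x hx) ▸ hbf x hx,
    fun x hx y hy => by rw [← he x hx, ← he y hy]; exact hlf x hx y hy⟩

lemma GoodOn.mono {S T : Set ℝ} {f : ℝ → ℝ} (hf : GoodOn S f) (hT : T ⊆ S) : GoodOn T f := by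
  obtain ⟨Bf, Lf, hBf, hLf, hbf, hlf⟩ := hf
  exact ⟨Bf, Lf, hBf, hLf, fun x hx => hbf x (hT hx), fun x hx y hy => hlf x (hT hx) y (hT hy)⟩

/-- glue two adjacent Lipschitz pieces -/
lemma lip_glue {f : ℝ → ℝ} {K m : ℝ} {S T : Set ℝ} (hK : 0 ≤ K)
    (hS : ∀ x ∈ S, x ≤ m) (hT : ∀ x ∈ T, m ≤ x) (hmS : m ∈ S) (hmT : m ∈ T)
    (h1 : ∀ x ∈ S, ∀ y ∈ S, |f x - f y| ≤ K * |x - y|)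
    (h2 : ∀ x ∈ T, ∀ y ∈ T, |f x - f y| ≤ K * |x - y|) :
    ∀ x ∈ S ∪ T, ∀ y ∈ S ∪ T, |f x - f y| ≤ K * |x - y| := by
  have cross : ∀ x ∈ S, ∀ y ∈ T, |f x - f y| ≤ K * |x - y| := by
    intro x hx y hy
    have hxm : x ≤ m := hS x hx
    have hmy : m ≤ y := hT y hy
    have t1 := h1 x hx m hmS
    have t2 := h2 m hmT y hy
    have tri := abs_sub_le (f x) (f m) (f y)
    have e1 : |x - m| = m - x := by rw [abs_sub_comm, abs_of_nonneg (by linarith)]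
    have e2 : |m - y| = y - m := by rw [abs_sub_comm, abs_of_nonneg (by linarith)]
    have e3 : |x - y| = y - x := by rw [abs_sub_comm, abs_of_nonneg (by linarith)]
    rw [e1] at t1; rw [e2] at t2; rw [e3]
    nlinarith
  intro x hx y hy
  rcases hx with hx | hx <;> rcases hy with hy | hy
  · exact h1 x hx y hy
  · exact cross x hx y hy
  · rw [abs_sub_comm (f x) (f y), abs_sub_comm x y]; exact cross y hy x hx
  · exact h2 x hx y hy

/-- extend a Lipschitz bound on `Ioi ξ` to `Ici ξ` using the one-sided limit -/
lemma lip_Ici {f : ℝ → ℝ} {K ξ : ℝ}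
    (h1 : ∀ x ∈ Ioi ξ, ∀ y ∈ Ioi ξ, |f x - f y| ≤ K * |x - y|)
    (hlim : Tendsto f (nhdsWithin ξ (Ioi ξ)) (nhds (f ξ))) :
    ∀ x ∈ Ici ξ, ∀ y ∈ Ici ξ, |f x - f y| ≤ K * |x - y| := by
  have key : ∀ x ∈ Ioi ξ, |f x - f ξ| ≤ K * |x - ξ| := by
    intro x hx
    have hT1 : Tendsto (fun t => |f x - f t|) (nhdsWithin ξ (Ioi ξ)) (nhds (|f x - f ξ|)) :=
      (tendsto_const_nhds.sub hlim).abs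
    have hid : Tendsto (fun t : ℝ => t) (nhdsWithin ξ (Ioi ξ)) (nhds ξ) :=
      tendsto_id.mono_left nhdsWithin_le_nhds
    have hT2 : Tendsto (fun t => K * |x - t|) (nhdsWithin ξ (Ioi ξ)) (nhds (K * |x - ξ|)) :=
      ((tendsto_const_nhds.sub hid).abs).const_mul K
    refine le_of_tendsto_of_tendsto hT1 hT2 ?_
    filter_upwards [self_mem_nhdsWithin] with t ht
    exact h1 x hx t ht
  intro x hx y hy
  rcases eq_or_lt_of_le (mem_Ici.mp hx) with hx' | hx' <;>
    rcases eq_or_lt_of_le (mem_Ici.mp hy) with hy' | hy'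
  · rw [← hx', ← hy']; simp
  · rw [← hx', abs_sub_comm (f ξ) (f y), abs_sub_comm ξ y]; exact key y hy'
  · rw [← hy']; exact key x hx'
  · exact h1 x hx' y hy'

lemma lip_Iic {f : ℝ → ℝ} {K ξ : ℝ}
    (h1 : ∀ x ∈ Iio ξ, ∀ y ∈ Iio ξ, |f x - f y| ≤ K * |x - y|)
    (hlim : Tendsto f (nhdsWithin ξ (Iio ξ)) (nhds (f ξ))) :
    ∀ x ∈ Iic ξ, ∀ y ∈ Iic ξ, |f x - f y| ≤ K * |x - y| := by
  have key : ∀ x ∈ Iio ξ, |f x - f ξ| ≤ K * |x - ξ| := by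
    intro x hx
    have hT1 : Tendsto (fun t => |f x - f t|) (nhdsWithin ξ (Iio ξ)) (nhds (|f x - f ξ|)) :=
      (tendsto_const_nhds.sub hlim).abs
    have hid : Tendsto (fun t : ℝ => t) (nhdsWithin ξ (Iio ξ)) (nhds ξ) :=
      tendsto_id.mono_left nhdsWithin_le_nhds
    have hT2 : Tendsto (fun t => K * |x - t|) (nhdsWithin ξ (Iio ξ)) (nhds (K * |x - ξ|)) :=
      ((tendsto_const_nhds.sub hid).abs).const_mul K
    refine le_of_tendsto_of_tendsto hT1 hT2 ?_
    filter_upwards [self_mem_nhdsWithin] with t ht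
    exact h1 x hx t ht
  intro x hx y hy
  rcases eq_or_lt_of_le (mem_Iic.mp hx) with hx' | hx' <;>
    rcases eq_or_lt_of_le (mem_Iic.mp hy) with hy' | hy'
  · rw [hx', hy']; simp
  · rw [hx', abs_sub_comm (f ξ) (f y), abs_sub_comm ξ y]; exact key y hy'
  · rw [hy']; exact key x hx'
  · exact h1 x hx' y hy'

lemma continuous_D1p (ξ c : ℝ) : Continuous (D1p ξ c) := by
  unfold D1p
  have hw := continuous_wf ξ c
  fun_prop

lemma continuous_D2p (ξ c : ℝ) : Continuous (D2p ξ c) := by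
  unfold D2p
  have hw := continuous_wf ξ c
  fun_prop

set_option maxHeartbeats 1000000 in
/-- the transformed drift `μ̃ = h ∘ G⁻¹`, where
`h(x) = μ(x)(1 + α φ̄'(x)) + (1/2) α φ̄''(x) σ(x)²` for `x ≠ ξ` and
`h(ξ) = (μ(ξ+) + μ(ξ-))/2`, is Lipschitz continuous on `ℝ`. -/
theorem transformed_drift_lipschitz
    (ξ : ℝ) (μ σ : ℝ → ℝ) (Lμ : ℝ)
    (hμleft : ∀ x ∈ Set.Iio ξ, ∀ y ∈ Set.Iio ξ, |μ x - μ y| ≤ Lμ * |x - y|)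
    (hμright : ∀ x ∈ Set.Ioi ξ, ∀ y ∈ Set.Ioi ξ, |μ x - μ y| ≤ Lμ * |x - y|)
    (μplus μminus : ℝ)
    (hplus : Tendsto μ (nhdsWithin ξ (Set.Ioi ξ)) (nhds μplus))
    (hminus : Tendsto μ (nhdsWithin ξ (Set.Iio ξ)) (nhds μminus))
    (Lσ : ℝ≥0) (hσ : LipschitzWith Lσ σ) (hσξ : σ ξ ≠ 0)
    (α : ℝ) (hα : α = (μminus - μplus) / (2 * (σ ξ) ^ 2))
    (c : ℝ) (hc : 0 < c) (hαc : 6 * |α| * c < 1)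
    (h : ℝ → ℝ)
    (hh : ∀ x : ℝ, x ≠ ξ →
      h x = μ x * (1 + α * deriv (phibar ξ c) x)
        + (1 / 2) * α * deriv (deriv (phibar ξ c)) x * (σ x) ^ 2)
    (hhξ : h ξ = (μplus + μminus) / 2) :
    ∃ K : ℝ≥0, LipschitzWith K (h ∘ Function.invFun (transformG ξ α c)) := by
  classical
  have hLμ0 : 0 ≤ Lμ := by
    have h12 := hμright (ξ+1) (by simp only [Set.mem_Ioi]; linarith) (ξ+2) (by simp only [Set.mem_Ioi]; linarith)
    have he : |(ξ+1 : ℝ) - (ξ+2)| = 1 := by rw [show (ξ+1:ℝ) - (ξ+2) = -1 by ring]; simp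
    rw [he, mul_one] at h12
    exact le_trans (abs_nonneg _) h12
  have hσreal : ∀ x y, |σ x - σ y| ≤ (Lσ : ℝ) * |x - y| := by
    intro x y
    have := hσ.dist_le_mul x y
    rwa [Real.dist_eq, Real.dist_eq] at this
  -- PART A : inverse of G is Lipschitz
  have hdiff : Differentiable ℝ (phibar ξ c) := fun x => (hasDerivAt_phibar ξ c x).differentiableAt
  have hlipph : ∀ x y, |phibar ξ c x - phibar ξ c y| ≤ (2*c) * |x - y| := by
    have hl : LipschitzWith (NNReal.mk (2*c) (by positivity)) (phibar ξ c) := by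
      apply lipschitzWith_of_nnnorm_deriv_le hdiff
      intro x
      rw [← NNReal.coe_le_coe, coe_nnnorm, Real.norm_eq_abs, deriv_phibar]
      exact Dph_bound hc x
    intro x y
    have := hl.dist_le_mul x y
    rwa [Real.dist_eq, Real.dist_eq] at this
  have hsmall : 2 * |α| * c < 1 := by nlinarith [abs_nonneg α, hc.le, mul_nonneg (abs_nonneg α) hc.le]
  have hpos : 0 < 1 - 2 * |α| * c := by linarith
  have hanti : AntilipschitzWith (NNReal.mk (1 - 2 * |α| * c)⁻¹ (by positivity)) (transformG ξ α c) := by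
    apply AntilipschitzWith.of_le_mul_dist
    intro x y
    rw [Real.dist_eq, Real.dist_eq]
    have hGxy : transformG ξ α c x - transformG ξ α c y
        = (x - y) + α * (phibar ξ c x - phibar ξ c y) := by unfold transformG; ring
    have htri : |x - y| ≤ |transformG ξ α c x - transformG ξ α c y|
        + |α * (phibar ξ c x - phibar ξ c y)| := by
      have : (x - y) = (transformG ξ α c x - transformG ξ α c y)
          - α * (phibar ξ c x - phibar ξ c y) := by rw [hGxy]; ring
      rw [this]
      exact abs_sub _ _
    have hb : |α * (phibar ξ c x - phibar ξ c y)| ≤ 2 * |α| * c * |x - y| := by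
      rw [abs_mul]
      calc |α| * |phibar ξ c x - phibar ξ c y| ≤ |α| * ((2*c) * |x - y|) :=
            mul_le_mul_of_nonneg_left (hlipph x y) (abs_nonneg α)
        _ = 2 * |α| * c * |x - y| := by ring
    have hmain : (1 - 2 * |α| * c) * |x - y| ≤ |transformG ξ α c x - transformG ξ α c y| := by
      nlinarith
    rw [NNReal.coe_mk, ← div_eq_inv_mul, le_div_iff₀ hpos]
    nlinarith [hmain]
  have hGcont : Continuous (transformG ξ α c) := by
    unfold transformG
    exact continuous_id.add (continuous_const.mul hdiff.continuous)
  have hfix : ∀ z, c ≤ |z - ξ| → transformG ξ α c z = z := by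
    intro z hz
    unfold transformG
    rw [phibar_eq, wf_zero hc hz]
    ring
  have hsurj : Function.Surjective (transformG ξ α c) := by
    intro z
    by_cases hz : c ≤ |z - ξ|
    · exact ⟨z, hfix z hz⟩
    · push_neg at hz
      rw [abs_lt] at hz
      have h1 : transformG ξ α c (ξ - c) = ξ - c := by
        apply hfix
        rw [show ξ - c - ξ = -c by ring, abs_neg, abs_of_pos hc]
      have h2 : transformG ξ α c (ξ + c) = ξ + c := by
        apply hfix
        rw [show ξ + c - ξ = c by ring, abs_of_pos hc]
      have hz2 : z ∈ Icc (transformG ξ α c (ξ - c)) (transformG ξ α c (ξ + c)) := by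
        rw [h1, h2]
        constructor <;> [linarith [hz.1]; linarith [hz.2]]
      obtain ⟨x, _, hx⟩ := intermediate_value_Icc (by linarith : ξ - c ≤ ξ + c)
        hGcont.continuousOn hz2
      exact ⟨x, hx⟩
  have hGinvlip : LipschitzWith (NNReal.mk (1 - 2 * |α| * c)⁻¹ (by positivity))
      (Function.invFun (transformG ξ α c)) :=
    hanti.to_rightInverse (Function.rightInverse_invFun hsurj)
  -- PART B : h is Lipschitz
  have hfr : ∀ t ∈ Ioi ξ, h t = μ t * (1 + α * D1p ξ c t) + 1 / 2 * α * D2p ξ c t * σ t ^ 2 := by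
    intro t ht
    rw [hh t (ne_of_gt ht), deriv2_right ht, deriv_phibar, Dph_eq_right ht]
  have hfl : ∀ t ∈ Iio ξ, h t = μ t * (1 + α * -D1p ξ c t) + 1 / 2 * α * -D2p ξ c t * σ t ^ 2 := by
    intro t ht
    rw [hh t (ne_of_lt ht), deriv2_left ht, deriv_phibar, Dph_eq_left ht]
  have hmuBr : ∀ x ∈ Ioi ξ, |μ x - μplus| ≤ Lμ * (x - ξ) := by
    intro x hx
    have hT1 : Tendsto (fun t => |μ x - μ t|) (nhdsWithin ξ (Ioi ξ)) (nhds |μ x - μplus|) :=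
      (tendsto_const_nhds.sub hplus).abs
    have hid : Tendsto (fun t : ℝ => t) (nhdsWithin ξ (Ioi ξ)) (nhds ξ) :=
      tendsto_id.mono_left nhdsWithin_le_nhds
    have hT2 : Tendsto (fun t => Lμ * |x - t|) (nhdsWithin ξ (Ioi ξ)) (nhds (Lμ * |x - ξ|)) :=
      ((tendsto_const_nhds.sub hid).abs).const_mul Lμ
    have hle := le_of_tendsto_of_tendsto hT1 hT2
      (by filter_upwards [self_mem_nhdsWithin] with t ht; exact hμright x hx t ht)
    rwa [abs_of_pos (by simpa using hx : (0:ℝ) < x - ξ)] at hle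
  have hmuBl : ∀ x ∈ Iio ξ, |μ x - μminus| ≤ Lμ * (ξ - x) := by
    intro x hx
    have hT1 : Tendsto (fun t => |μ x - μ t|) (nhdsWithin ξ (Iio ξ)) (nhds |μ x - μminus|) :=
      (tendsto_const_nhds.sub hminus).abs
    have hid : Tendsto (fun t : ℝ => t) (nhdsWithin ξ (Iio ξ)) (nhds ξ) :=
      tendsto_id.mono_left nhdsWithin_le_nhds
    have hT2 : Tendsto (fun t => Lμ * |x - t|) (nhdsWithin ξ (Iio ξ)) (nhds (Lμ * |x - ξ|)) :=
      ((tendsto_const_nhds.sub hid).abs).const_mul Lμ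
    have hle := le_of_tendsto_of_tendsto hT1 hT2
      (by filter_upwards [self_mem_nhdsWithin] with t ht; exact hμleft x hx t ht)
    rwa [abs_of_neg (by simpa using hx : x - ξ < 0), neg_sub] at hle
  -- right interval (ξ, ξ+c]
  have hGs : GoodOn (Ioc ξ (ξ+c)) (fun x => x - ξ) := by
    refine ⟨c, 1, hc.le, zero_le_one, ?_, ?_⟩
    · intro x hx
      rw [abs_of_pos (by linarith [hx.1] : (0:ℝ) < x - ξ)]
      linarith [hx.2]
    · intro x hx y hy
      rw [show x - ξ - (y - ξ) = x - y by ring, one_mul]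
  have hGw : GoodOn (Ioc ξ (ξ+c)) (wf ξ c) := by
    refine ⟨1, 2/c, zero_le_one, by positivity, ?_, ?_⟩
    · intro x hx
      rw [abs_of_nonneg (wf_nonneg ξ c x)]
      exact wf_le_one ξ c x
    · intro x hx y hy
      have l1 : |wf ξ c x - wf ξ c y|
          ≤ |(1 - (x-ξ)^2/c^2) - (1 - (y-ξ)^2/c^2)| := lip_vp _ _
      have e : (1 - (x-ξ)^2/c^2) - (1 - (y-ξ)^2/c^2) = (((x-ξ)+(y-ξ)) * (y - x)) / c^2 := by
        field_simp
        ring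
      rw [e, abs_div, abs_mul, abs_of_nonneg (sq_nonneg c), abs_sub_comm y x] at l1
      have hsum : |(x-ξ)+(y-ξ)| ≤ 2*c := by
        rw [abs_le]
        constructor
        · nlinarith [hx.1, hy.1]
        · nlinarith [hx.2, hy.2]
      calc |wf ξ c x - wf ξ c y| ≤ |(x-ξ)+(y-ξ)| * |x - y| / c^2 := l1
        _ ≤ (2*c) * |x - y| / c^2 := by gcongr
        _ = 2/c * |x - y| := by field_simp
  have hGmu : GoodOn (Ioc ξ (ξ+c)) μ := by
    refine ⟨|μplus| + Lμ * c, Lμ, by positivity, hLμ0, ?_, fun x hx y hy => hμright x hx.1 y hy.1⟩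
    intro x hx
    have hb := hmuBr x hx.1
    have h2 : Lμ * (x - ξ) ≤ Lμ * c := mul_le_mul_of_nonneg_left (by linarith [hx.2]) hLμ0
    have h0 : μ x = μplus + (μ x - μplus) := by ring
    rw [h0]
    refine le_trans (abs_add_le _ _) ?_
    linarith
  have hGsig : GoodOn (Ioc ξ (ξ+c)) σ := by
    refine ⟨|σ ξ| + Lσ * c, Lσ, by positivity, Lσ.coe_nonneg, ?_, fun x _ y _ => hσreal x y⟩
    intro x hx
    have hb := hσreal x ξ
    have h1 : |x - ξ| ≤ c := by
      rw [abs_of_pos (by linarith [hx.1] : (0:ℝ) < x - ξ)]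
      linarith [hx.2]
    have h2 : (Lσ:ℝ) * |x - ξ| ≤ Lσ * c := mul_le_mul_of_nonneg_left h1 Lσ.coe_nonneg
    have h0 : σ x = σ ξ + (σ x - σ ξ) := by ring
    rw [h0]
    refine le_trans (abs_add_le _ _) ?_
    linarith
  have hGsig2 : GoodOn (Ioc ξ (ξ+c)) (fun x => σ x ^ 2) :=
    (hGsig.mul hGsig).congr (fun x _ => (pow_two (σ x)).symm)
  have hGD1 : GoodOn (Ioc ξ (ξ+c)) (D1p ξ c) := by
    have e1 := ((GoodOn.const (Ioc ξ (ξ+c)) 2).mul hGs).mul (hGw.mul (hGw.mul hGw))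
    have e2 := ((GoodOn.const (Ioc ξ (ξ+c)) (-(6/c^2))).mul
      (hGs.mul (hGs.mul hGs))).mul (hGw.mul hGw)
    refine (e1.add e2).congr ?_
    intro x hx
    unfold D1p
    ring
  have hGD2 : GoodOn (Ioc ξ (ξ+c)) (D2p ξ c) := by
    have e1 := (GoodOn.const (Ioc ξ (ξ+c)) 2).mul (hGw.mul (hGw.mul hGw))
    have e2 := ((GoodOn.const (Ioc ξ (ξ+c)) (-(30/c^2))).mul (hGs.mul hGs)).mul (hGw.mul hGw)
    have e3 := ((GoodOn.const (Ioc ξ (ξ+c)) (24/c^4)).mul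
      ((hGs.mul hGs).mul (hGs.mul hGs))).mul hGw
    refine ((e1.add e2).add e3).congr ?_
    intro x hx
    unfold D2p
    ring
  have hGh1 : GoodOn (Ioc ξ (ξ+c)) h := by
    have emu := hGmu.mul ((GoodOn.const (Ioc ξ (ξ+c)) 1).add ((GoodOn.const _ α).mul hGD1))
    have esig := ((GoodOn.const (Ioc ξ (ξ+c)) (1/2*α)).mul hGD2).mul hGsig2
    refine (emu.add esig).congr ?_
    intro x hx
    rw [hfr x hx.1]
  obtain ⟨B1, L1, hB1, hL1, hb1, hl1⟩ := hGh1
  have hS2 : ∀ x ∈ Ici (ξ+c), h x = μ x := by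
    intro x hx
    have hx1 : ξ < x := by have : ξ + c ≤ x := hx; linarith
    have hw0 : wf ξ c x = 0 := wf_zero hc (by rw [abs_of_pos (by linarith)]; linarith [mem_Ici.mp hx])
    rw [hfr x hx1, D1p_zero hw0, D2p_zero hw0]
    ring
  have hlipIoi : ∀ x ∈ Ioi ξ, ∀ y ∈ Ioi ξ, |h x - h y| ≤ (L1 + Lμ) * |x - y| := by
    have hglue := lip_glue (f := h) (K := L1 + Lμ) (m := ξ+c)
      (S := Ioc ξ (ξ+c)) (T := Ici (ξ+c)) (by linarith)
      (fun x hx => hx.2) (fun x hx => mem_Ici.mp hx) ⟨by linarith, le_refl _⟩ (mem_Ici.mpr (le_refl _))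
      (fun x hx y hy => le_trans (hl1 x hx y hy)
        (mul_le_mul_of_nonneg_right (by linarith) (abs_nonneg _)))
      (fun x hx y hy => by
        rw [hS2 x hx, hS2 y hy]
        refine le_trans (hμright x (by exact lt_of_lt_of_le (by linarith : ξ < ξ + c) (mem_Ici.mp hx)) y
          (lt_of_lt_of_le (by linarith : ξ < ξ + c) (mem_Ici.mp hy))) ?_
        exact mul_le_mul_of_nonneg_right (by linarith) (abs_nonneg _))
    rw [Ioc_union_Ici_eq_Ioi (by linarith : ξ < ξ + c)] at hglue
    exact hglue
  have hTD1 : Tendsto (D1p ξ c) (nhdsWithin ξ (Ioi ξ)) (nhds 0) := by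
    have h0 : Tendsto (D1p ξ c) (nhdsWithin ξ (Ioi ξ)) (nhds (D1p ξ c ξ)) :=
      ((continuous_D1p ξ c).tendsto ξ).mono_left nhdsWithin_le_nhds
    rwa [D1p_xi] at h0
  have hTD2 : Tendsto (D2p ξ c) (nhdsWithin ξ (Ioi ξ)) (nhds 2) := by
    have h0 : Tendsto (D2p ξ c) (nhdsWithin ξ (Ioi ξ)) (nhds (D2p ξ c ξ)) :=
      ((continuous_D2p ξ c).tendsto ξ).mono_left nhdsWithin_le_nhds
    rwa [D2p_xi] at h0
  have hTsig : Tendsto σ (nhdsWithin ξ (Ioi ξ)) (nhds (σ ξ)) :=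
    (hσ.continuous.tendsto ξ).mono_left nhdsWithin_le_nhds
  have hTr : Tendsto (fun t => μ t * (1 + α * D1p ξ c t) + 1/2*α*D2p ξ c t * σ t^2)
      (nhdsWithin ξ (Ioi ξ)) (nhds (μplus * (1 + α*0) + 1/2*α*2*(σ ξ)^2)) :=
    (hplus.mul (tendsto_const_nhds.add (hTD1.const_mul α))).add
      ((hTD2.const_mul (1/2*α)).mul (hTsig.pow 2))
  have hσ2ne : (σ ξ)^2 ≠ 0 := pow_ne_zero 2 hσξ
  have hval : μplus * (1 + α*0) + 1/2*α*2*(σ ξ)^2 = h ξ := by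
    rw [hhξ, hα]
    field_simp
    ring
  have hlimr : Tendsto h (nhdsWithin ξ (Ioi ξ)) (nhds (h ξ)) := by
    have hev : (fun t => μ t * (1 + α * D1p ξ c t) + 1/2*α*D2p ξ c t * σ t^2)
        =ᶠ[nhdsWithin ξ (Ioi ξ)] h := by
      filter_upwards [self_mem_nhdsWithin] with t ht
      exact (hfr t ht).symm
    have := hTr.congr' hev
    rwa [hval] at this
  have hIci : ∀ x ∈ Ici ξ, ∀ y ∈ Ici ξ, |h x - h y| ≤ (L1 + Lμ) * |x - y| :=
    lip_Ici hlipIoi hlimr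
  -- left interval [ξ-c, ξ)
  have habsL : ∀ x ∈ Ico (ξ-c) ξ, |x - ξ| ≤ c := by
    intro x hx
    rw [abs_of_neg (by linarith [hx.2] : x - ξ < 0)]
    linarith [hx.1]
  have hGs' : GoodOn (Ico (ξ-c) ξ) (fun x => x - ξ) := by
    refine ⟨c, 1, hc.le, zero_le_one, habsL, ?_⟩
    intro x hx y hy
    rw [show x - ξ - (y - ξ) = x - y by ring, one_mul]
  have hGw' : GoodOn (Ico (ξ-c) ξ) (wf ξ c) := by
    refine ⟨1, 2/c, zero_le_one, by positivity, ?_, ?_⟩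
    · intro x hx
      rw [abs_of_nonneg (wf_nonneg ξ c x)]
      exact wf_le_one ξ c x
    · intro x hx y hy
      have l1 : |wf ξ c x - wf ξ c y|
          ≤ |(1 - (x-ξ)^2/c^2) - (1 - (y-ξ)^2/c^2)| := lip_vp _ _
      have e : (1 - (x-ξ)^2/c^2) - (1 - (y-ξ)^2/c^2) = (((x-ξ)+(y-ξ)) * (y - x)) / c^2 := by
        field_simp
        ring
      rw [e, abs_div, abs_mul, abs_of_nonneg (sq_nonneg c), abs_sub_comm y x] at l1
      have hsum : |(x-ξ)+(y-ξ)| ≤ 2*c := by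
        rw [abs_le]
        constructor
        · nlinarith [hx.1, hy.1]
        · nlinarith [hx.2, hy.2]
      calc |wf ξ c x - wf ξ c y| ≤ |(x-ξ)+(y-ξ)| * |x - y| / c^2 := l1
        _ ≤ (2*c) * |x - y| / c^2 := by gcongr
        _ = 2/c * |x - y| := by field_simp
  have hGmu' : GoodOn (Ico (ξ-c) ξ) μ := by
    refine ⟨|μminus| + Lμ * c, Lμ, by positivity, hLμ0, ?_, fun x hx y hy => hμleft x hx.2 y hy.2⟩
    intro x hx
    have hb := hmuBl x hx.2
    have h2 : Lμ * (ξ - x) ≤ Lμ * c := mul_le_mul_of_nonneg_left (by linarith [hx.1]) hLμ0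
    have h0 : μ x = μminus + (μ x - μminus) := by ring
    rw [h0]
    refine le_trans (abs_add_le _ _) ?_
    linarith
  have hGsig' : GoodOn (Ico (ξ-c) ξ) σ := by
    refine ⟨|σ ξ| + Lσ * c, Lσ, by positivity, Lσ.coe_nonneg, ?_, fun x _ y _ => hσreal x y⟩
    intro x hx
    have hb := hσreal x ξ
    have h2 : (Lσ:ℝ) * |x - ξ| ≤ Lσ * c := mul_le_mul_of_nonneg_left (habsL x hx) Lσ.coe_nonneg
    have h0 : σ x = σ ξ + (σ x - σ ξ) := by ring
    rw [h0]
    refine le_trans (abs_add_le _ _) ?_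
    linarith
  have hGsig2' : GoodOn (Ico (ξ-c) ξ) (fun x => σ x ^ 2) :=
    (hGsig'.mul hGsig').congr (fun x _ => (pow_two (σ x)).symm)
  have hGD1' : GoodOn (Ico (ξ-c) ξ) (D1p ξ c) := by
    have e1 := ((GoodOn.const (Ico (ξ-c) ξ) 2).mul hGs').mul (hGw'.mul (hGw'.mul hGw'))
    have e2 := ((GoodOn.const (Ico (ξ-c) ξ) (-(6/c^2))).mul
      (hGs'.mul (hGs'.mul hGs'))).mul (hGw'.mul hGw')
    refine (e1.add e2).congr ?_
    intro x hx
    unfold D1p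
    ring
  have hGD2' : GoodOn (Ico (ξ-c) ξ) (D2p ξ c) := by
    have e1 := (GoodOn.const (Ico (ξ-c) ξ) 2).mul (hGw'.mul (hGw'.mul hGw'))
    have e2 := ((GoodOn.const (Ico (ξ-c) ξ) (-(30/c^2))).mul (hGs'.mul hGs')).mul (hGw'.mul hGw')
    have e3 := ((GoodOn.const (Ico (ξ-c) ξ) (24/c^4)).mul
      ((hGs'.mul hGs').mul (hGs'.mul hGs'))).mul hGw'
    refine ((e1.add e2).add e3).congr ?_
    intro x hx
    unfold D2p
    ring
  have hGh1' : GoodOn (Ico (ξ-c) ξ) h := by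
    have emu := hGmu'.mul ((GoodOn.const (Ico (ξ-c) ξ) 1).add
      ((GoodOn.const _ (-α)).mul hGD1'))
    have esig := ((GoodOn.const (Ico (ξ-c) ξ) (-(1/2)*α)).mul hGD2').mul hGsig2'
    refine (emu.add esig).congr ?_
    intro x hx
    rw [hfl x hx.2]
    ring
  obtain ⟨B2, L2, hB2, hL2, hb2, hl2⟩ := hGh1'
  have hS2' : ∀ x ∈ Iic (ξ-c), h x = μ x := by
    intro x hx
    have hx1 : x < ξ := by have : x ≤ ξ - c := hx; linarith
    have hxc : x ≤ ξ - c := hx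
    have habs : c ≤ |x - ξ| := by
      rw [abs_of_neg (by linarith : x - ξ < 0)]
      linarith
    have hw0 : wf ξ c x = 0 := wf_zero hc habs
    rw [hfl x hx1, D1p_zero hw0, D2p_zero hw0]
    ring
  have hlipIio : ∀ x ∈ Iio ξ, ∀ y ∈ Iio ξ, |h x - h y| ≤ (L2 + Lμ) * |x - y| := by
    have hglue := lip_glue (f := h) (K := L2 + Lμ) (m := ξ-c)
      (S := Iic (ξ-c)) (T := Ico (ξ-c) ξ) (by linarith)
      (fun x hx => mem_Iic.mp hx) (fun x hx => hx.1)
      (mem_Iic.mpr (le_refl _)) ⟨le_refl _, by linarith⟩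
      (fun x hx y hy => by
        rw [hS2' x hx, hS2' y hy]
        refine le_trans (hμleft x (lt_of_le_of_lt (mem_Iic.mp hx) (by linarith : ξ - c < ξ)) y
          (lt_of_le_of_lt (mem_Iic.mp hy) (by linarith : ξ - c < ξ))) ?_
        exact mul_le_mul_of_nonneg_right (by linarith) (abs_nonneg _))
      (fun x hx y hy => le_trans (hl2 x hx y hy)
        (mul_le_mul_of_nonneg_right (by linarith) (abs_nonneg _)))
    rw [Iic_union_Ico_eq_Iio (by linarith : ξ - c < ξ)] at hglue
    exact hglue
  have hTD1' : Tendsto (D1p ξ c) (nhdsWithin ξ (Iio ξ)) (nhds 0) := by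
    have h0 : Tendsto (D1p ξ c) (nhdsWithin ξ (Iio ξ)) (nhds (D1p ξ c ξ)) :=
      ((continuous_D1p ξ c).tendsto ξ).mono_left nhdsWithin_le_nhds
    rwa [D1p_xi] at h0
  have hTD2' : Tendsto (D2p ξ c) (nhdsWithin ξ (Iio ξ)) (nhds 2) := by
    have h0 : Tendsto (D2p ξ c) (nhdsWithin ξ (Iio ξ)) (nhds (D2p ξ c ξ)) :=
      ((continuous_D2p ξ c).tendsto ξ).mono_left nhdsWithin_le_nhds
    rwa [D2p_xi] at h0
  have hTsig' : Tendsto σ (nhdsWithin ξ (Iio ξ)) (nhds (σ ξ)) :=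
    (hσ.continuous.tendsto ξ).mono_left nhdsWithin_le_nhds
  have hTr' : Tendsto (fun t => μ t * (1 + α * -D1p ξ c t) + 1/2*α* -D2p ξ c t * σ t^2)
      (nhdsWithin ξ (Iio ξ)) (nhds (μminus * (1 + α * -0) + 1/2*α* -2*(σ ξ)^2)) :=
    (hminus.mul (tendsto_const_nhds.add ((hTD1'.neg).const_mul α))).add
      (((hTD2'.neg).const_mul (1/2*α)).mul (hTsig'.pow 2))
  have hval' : μminus * (1 + α * -0) + 1/2*α* -2*(σ ξ)^2 = h ξ := by
    rw [hhξ, hα]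
    field_simp
    ring
  have hliml : Tendsto h (nhdsWithin ξ (Iio ξ)) (nhds (h ξ)) := by
    have hev : (fun t => μ t * (1 + α * -D1p ξ c t) + 1/2*α* -D2p ξ c t * σ t^2)
        =ᶠ[nhdsWithin ξ (Iio ξ)] h := by
      filter_upwards [self_mem_nhdsWithin] with t ht
      exact (hfl t ht).symm
    have h0 := hTr'.congr' hev
    rwa [hval'] at h0
  have hIic : ∀ x ∈ Iic ξ, ∀ y ∈ Iic ξ, |h x - h y| ≤ (L2 + Lμ) * |x - y| :=
    lip_Iic hlipIio hliml
  -- glue at ξ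
  have htot : ∀ x y : ℝ, |h x - h y| ≤ (L1 + L2 + 2*Lμ) * |x - y| := by
    have hglue := lip_glue (f := h) (K := L1 + L2 + 2*Lμ) (m := ξ)
      (S := Iic ξ) (T := Ici ξ) (by linarith)
      (fun x hx => mem_Iic.mp hx) (fun x hx => mem_Ici.mp hx)
      (mem_Iic.mpr (le_refl _)) (mem_Ici.mpr (le_refl _))
      (fun x hx y hy => le_trans (hIic x hx y hy)
        (mul_le_mul_of_nonneg_right (by linarith) (abs_nonneg _)))
      (fun x hx y hy => le_trans (hIci x hx y hy)
        (mul_le_mul_of_nonneg_right (by linarith) (abs_nonneg _)))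
    rw [Iic_union_Ici] at hglue
    intro x y
    exact hglue x (mem_univ x) y (mem_univ y)
  have hhlip : LipschitzWith ⟨L1 + L2 + 2*Lμ, by linarith⟩ h := by
    apply LipschitzWith.of_dist_le_mul
    intro x y
    rw [Real.dist_eq, Real.dist_eq]
    exact htot x y
  exact ⟨_, hhlip.comp hGinvlip⟩
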